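/- Under the prior (1−w)δ₀ + w γ(·;c) on μ and X|μ ∼ N(μ,1), the posterior median δ(x;w,c) is a nondecreasing function of x. -/

import Mathlib

open MeasureTheory Real Topology

/-- Standard normal density. -/
noncomputable def stdN (x : ℝ) : ℝ := (Real.sqrt (2 * Real.pi))⁻¹ * Real.exp (-x ^ 2 / 2)

/-- Convolution `g(x;c) = ∫ φ(x−μ) γ₀(μ−c) dμ`. -/
noncomputable def conv (γ₀ : ℝ → ℝ) (c x : ℝ) : ℝ := ∫ μ : ℝ, stdN (x - μ) * γ₀ (μ - c)

/-- Marginal density `m(x;w,c) = (1−w)φ(x) + w g(x;c)`. -/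
noncomputable def marg (γ₀ : ℝ → ℝ) (w c x : ℝ) : ℝ := (1 - w) * stdN x + w * conv γ₀ c x

/-- Posterior CDF of `μ` given `X = x` under the prior `(1−w)δ₀ + w γ₀(·−c)`
and likelihood `X | μ ∼ N(μ,1)`. -/
noncomputable def postCDF (γ₀ : ℝ → ℝ) (w c x t : ℝ) : ℝ :=
  ((1 - w) * stdN x * (if (0:ℝ) ≤ t then 1 else 0)
    + w * ∫ μ in Set.Iic t, stdN (x - μ) * γ₀ (μ - c)) / marg γ₀ w c x

/-- Posterior median. -/
noncomputable def postMedian (γ₀ : ℝ → ℝ) (w c x : ℝ) : ℝ :=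
  sInf {t : ℝ | 1 / 2 ≤ postCDF γ₀ w c x t}

/-! ### Auxiliary lemmas -/

lemma stdN_pos (x : ℝ) : 0 < stdN x := by
  unfold stdN
  have h : (0:ℝ) < Real.sqrt (2 * Real.pi) := Real.sqrt_pos.2 (by positivity)
  positivity

lemma stdN_le (x : ℝ) : stdN x ≤ (Real.sqrt (2 * Real.pi))⁻¹ := by
  unfold stdN
  have h : (0:ℝ) < Real.sqrt (2 * Real.pi) := Real.sqrt_pos.2 (by positivity)
  nth_rewrite 2 [← mul_one ((Real.sqrt (2 * Real.pi))⁻¹)]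
  refine mul_le_mul_of_nonneg_left ?_ (by positivity)
  rw [← Real.exp_zero]
  exact Real.exp_le_exp.2 (by nlinarith [sq_nonneg x])

lemma stdN_cont : Continuous stdN := by
  unfold stdN
  continuity

/-- Total positivity (TP2) of the Gaussian translation kernel. -/
lemma stdN_tp2 {x x' u v : ℝ} (hx : x ≤ x') (huv : u ≤ v) :
    stdN (x - v) * stdN (x' - u) ≤ stdN (x - u) * stdN (x' - v) := by
  have h : (0:ℝ) < Real.sqrt (2 * Real.pi) := Real.sqrt_pos.2 (by positivity)
  unfold stdN
  have key : ∀ a b : ℝ,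
      ((Real.sqrt (2 * Real.pi))⁻¹ * Real.exp a) * ((Real.sqrt (2 * Real.pi))⁻¹ * Real.exp b)
        = ((Real.sqrt (2 * Real.pi))⁻¹) ^ 2 * Real.exp (a + b) := by
    intro a b; rw [Real.exp_add]; ring
  rw [key, key]
  refine mul_le_mul_of_nonneg_left ?_ (by positivity)
  refine Real.exp_le_exp.2 ?_
  nlinarith [mul_nonneg (sub_nonneg.2 hx) (sub_nonneg.2 huv)]

lemma integrable_kernel (γ₀ : ℝ → ℝ) (hint : Integrable γ₀) (c x : ℝ) :
    Integrable (fun μ => stdN (x - μ) * γ₀ (μ - c)) := by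
  refine (hint.comp_sub_right c).bdd_mul (c := (Real.sqrt (2 * Real.pi))⁻¹) ?_ (Filter.Eventually.of_forall fun μ => ?_)
  · exact (stdN_cont.comp (continuous_const.sub continuous_id)).aestronglyMeasurable
  · rw [Real.norm_eq_abs, abs_of_pos (stdN_pos _)]
    exact stdN_le _

lemma conv_pos (γ₀ : ℝ → ℝ) (hnonneg : ∀ u, 0 ≤ γ₀ u)
    (hint : Integrable γ₀) (hdens : ∫ u : ℝ, γ₀ u = 1) (c x : ℝ) :
    0 < conv γ₀ c x := by
  unfold conv
  rw [integral_pos_iff_support_of_nonneg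
      (fun μ => mul_nonneg (stdN_pos _).le (hnonneg _)) (integrable_kernel γ₀ hint c x)]
  have hsupp : (Function.support fun μ => stdN (x - μ) * γ₀ (μ - c))
      = (fun μ => μ - c) ⁻¹' Function.support γ₀ := by
    ext μ
    simp [Function.support, (stdN_pos (x - μ)).ne']
  rw [hsupp]
  have hvol : volume ((fun μ => μ - c) ⁻¹' Function.support γ₀)
      = volume (Function.support γ₀) := by
    simpa [sub_eq_add_neg] using
      measure_preimage_add_right volume (-c) (Function.support γ₀)
  rw [hvol]
  refine (integral_pos_iff_support_of_nonneg (fun u => hnonneg u) hint).1 ?_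
  rw [hdens]; norm_num

lemma marg_pos (γ₀ : ℝ → ℝ) (hnonneg : ∀ u, 0 ≤ γ₀ u)
    (hint : Integrable γ₀) (hdens : ∫ u : ℝ, γ₀ u = 1)
    (w c x : ℝ) (hw : 0 ≤ w) (hw1 : w ≤ 1) :
    0 < marg γ₀ w c x := by
  have hc := conv_pos γ₀ hnonneg hint hdens c x
  have hs := stdN_pos x
  unfold marg
  rcases lt_or_eq_of_le hw1 with h | h
  · nlinarith [mul_pos (sub_pos.2 h) hs, mul_nonneg hw hc.le]
  · rw [h]; simpa using hc

lemma marg_split (γ₀ : ℝ → ℝ) (hint : Integrable γ₀) (w c x t : ℝ) :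
    marg γ₀ w c x
      = ((1 - w) * stdN x * (if (0:ℝ) ≤ t then 1 else 0)
          + w * ∫ μ in Set.Iic t, stdN (x - μ) * γ₀ (μ - c))
        + ((1 - w) * stdN x * (if (0:ℝ) ≤ t then 0 else 1)
          + w * ∫ μ in Set.Ioi t, stdN (x - μ) * γ₀ (μ - c)) := by
  have h := integrable_kernel γ₀ hint c x
  have hsplit : conv γ₀ c x
      = (∫ μ in Set.Iic t, stdN (x - μ) * γ₀ (μ - c))
        + ∫ μ in Set.Ioi t, stdN (x - μ) * γ₀ (μ - c) := by
    rw [conv, ← intervalIntegral.integral_Iic_add_Ioi (b := t) h.integrableOn h.integrableOn]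
  unfold marg
  rw [hsplit]
  split_ifs <;> ring

lemma key_ineq (a1 a2 b1 b2 k : ℝ) (ha1 : 0 ≤ a1) (hb1 : 0 ≤ b1)
    (h1 : a2 ≤ k * a1) (h2 : k * b1 ≤ b2) : a2 * b1 ≤ a1 * b2 := by
  nlinarith [mul_le_mul_of_nonneg_right h1 hb1, mul_le_mul_of_nonneg_left h2 ha1]

lemma div_anti (a1 a2 b1 b2 : ℝ) (hm1 : 0 < a1 + b1) (hm2 : 0 < a2 + b2)
    (h : a2 * b1 ≤ a1 * b2) : a2 / (a2 + b2) ≤ a1 / (a1 + b1) := by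
  rw [div_le_div_iff₀ hm2 hm1]
  nlinarith

/-- The posterior CDF is nonincreasing in `x` (stochastic dominance from MLR). -/
lemma postCDF_anti (γ₀ : ℝ → ℝ) (hnonneg : ∀ u, 0 ≤ γ₀ u)
    (hint : Integrable γ₀) (hdens : ∫ u : ℝ, γ₀ u = 1)
    (w c : ℝ) (hw : 0 ≤ w) (hw1 : w ≤ 1) (t : ℝ) {x x' : ℝ} (hx : x ≤ x') :
    postCDF γ₀ w c x' t ≤ postCDF γ₀ w c x t := by
  have hker : ∀ y : ℝ, Integrable (fun μ => stdN (y - μ) * γ₀ (μ - c)) :=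
    fun y => integrable_kernel γ₀ hint c y
  set k := stdN (x' - t) / stdN (x - t) with hkdef
  have hkpos : 0 < k := div_pos (stdN_pos _) (stdN_pos _)
  have hratio1 : ∀ μ, μ ≤ t → stdN (x' - μ) ≤ k * stdN (x - μ) := by
    intro μ hμ
    rw [hkdef, div_mul_eq_mul_div, le_div_iff₀ (stdN_pos _)]
    calc stdN (x' - μ) * stdN (x - t) = stdN (x - t) * stdN (x' - μ) := by ring
      _ ≤ stdN (x - μ) * stdN (x' - t) := stdN_tp2 hx hμ
      _ = stdN (x' - t) * stdN (x - μ) := by ring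
  have hratio2 : ∀ μ, t ≤ μ → k * stdN (x - μ) ≤ stdN (x' - μ) := by
    intro μ hμ
    rw [hkdef, div_mul_eq_mul_div, div_le_iff₀ (stdN_pos _)]
    calc stdN (x' - t) * stdN (x - μ) = stdN (x - μ) * stdN (x' - t) := by ring
      _ ≤ stdN (x - t) * stdN (x' - μ) := stdN_tp2 hx hμ
      _ = stdN (x' - μ) * stdN (x - t) := by ring
  have hI : (∫ μ in Set.Iic t, stdN (x' - μ) * γ₀ (μ - c))
      ≤ k * ∫ μ in Set.Iic t, stdN (x - μ) * γ₀ (μ - c) := by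
    rw [← integral_const_mul]
    refine setIntegral_mono_on (hker x').integrableOn
      (((hker x).const_mul k).integrableOn) measurableSet_Iic ?_
    intro μ hμ
    calc stdN (x' - μ) * γ₀ (μ - c)
        ≤ (k * stdN (x - μ)) * γ₀ (μ - c) :=
          mul_le_mul_of_nonneg_right (hratio1 μ hμ) (hnonneg _)
      _ = k * (stdN (x - μ) * γ₀ (μ - c)) := by ring
  have hJ : k * (∫ μ in Set.Ioi t, stdN (x - μ) * γ₀ (μ - c))
      ≤ ∫ μ in Set.Ioi t, stdN (x' - μ) * γ₀ (μ - c) := by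
    rw [← integral_const_mul]
    refine setIntegral_mono_on (((hker x).const_mul k).integrableOn)
      (hker x').integrableOn measurableSet_Ioi ?_
    intro μ hμ
    calc k * (stdN (x - μ) * γ₀ (μ - c))
        = (k * stdN (x - μ)) * γ₀ (μ - c) := by ring
      _ ≤ stdN (x' - μ) * γ₀ (μ - c) :=
          mul_le_mul_of_nonneg_right (hratio2 μ (le_of_lt hμ)) (hnonneg _)
  have hInn : ∀ (y : ℝ) (s : Set ℝ), 0 ≤ ∫ μ in s, stdN (y - μ) * γ₀ (μ - c) :=
    fun y s => integral_nonneg fun μ => mul_nonneg (stdN_pos _).le (hnonneg _)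
  have h1w : (0:ℝ) ≤ 1 - w := by linarith
  have hatomA : stdN x' * (if (0:ℝ) ≤ t then (1:ℝ) else 0)
      ≤ k * (stdN x * (if (0:ℝ) ≤ t then (1:ℝ) else 0)) := by
    split_ifs with h
    · simpa using hratio1 0 h
    · simp
  have hatomB : k * (stdN x * (if (0:ℝ) ≤ t then (0:ℝ) else 1))
      ≤ stdN x' * (if (0:ℝ) ≤ t then (0:ℝ) else 1) := by
    split_ifs with h
    · simp
    · simpa using hratio2 0 (le_of_lt (not_le.1 h))
  have hA : (1 - w) * stdN x' * (if (0:ℝ) ≤ t then (1:ℝ) else 0)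
        + w * (∫ μ in Set.Iic t, stdN (x' - μ) * γ₀ (μ - c))
      ≤ k * ((1 - w) * stdN x * (if (0:ℝ) ≤ t then (1:ℝ) else 0)
        + w * ∫ μ in Set.Iic t, stdN (x - μ) * γ₀ (μ - c)) := by
    nlinarith [mul_le_mul_of_nonneg_left hatomA h1w, mul_le_mul_of_nonneg_left hI hw]
  have hB : k * ((1 - w) * stdN x * (if (0:ℝ) ≤ t then (0:ℝ) else 1)
        + w * ∫ μ in Set.Ioi t, stdN (x - μ) * γ₀ (μ - c))
      ≤ (1 - w) * stdN x' * (if (0:ℝ) ≤ t then (0:ℝ) else 1)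
        + w * (∫ μ in Set.Ioi t, stdN (x' - μ) * γ₀ (μ - c)) := by
    nlinarith [mul_le_mul_of_nonneg_left hatomB h1w, mul_le_mul_of_nonneg_left hJ hw]
  have hindnn : ∀ a b : ℝ, 0 ≤ a → 0 ≤ b → 0 ≤ (if (0:ℝ) ≤ t then a else b) := by
    intro a b ha hb; split_ifs <;> assumption
  have hA1nn : 0 ≤ (1 - w) * stdN x * (if (0:ℝ) ≤ t then (1:ℝ) else 0)
      + w * ∫ μ in Set.Iic t, stdN (x - μ) * γ₀ (μ - c) :=
    add_nonneg (mul_nonneg (mul_nonneg h1w (stdN_pos _).le)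
      (hindnn 1 0 zero_le_one le_rfl)) (mul_nonneg hw (hInn _ _))
  have hB1nn : 0 ≤ (1 - w) * stdN x * (if (0:ℝ) ≤ t then (0:ℝ) else 1)
      + w * ∫ μ in Set.Ioi t, stdN (x - μ) * γ₀ (μ - c) :=
    add_nonneg (mul_nonneg (mul_nonneg h1w (stdN_pos _).le)
      (hindnn 0 1 le_rfl zero_le_one)) (mul_nonneg hw (hInn _ _))
  have hm1 : 0 < marg γ₀ w c x := marg_pos γ₀ hnonneg hint hdens w c x hw hw1
  have hm2 : 0 < marg γ₀ w c x' := marg_pos γ₀ hnonneg hint hdens w c x' hw hw1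
  rw [marg_split γ₀ hint w c x t] at hm1
  rw [marg_split γ₀ hint w c x' t] at hm2
  unfold postCDF
  rw [marg_split γ₀ hint w c x t, marg_split γ₀ hint w c x' t]
  exact div_anti _ _ _ _ hm1 hm2 (key_ineq _ _ _ _ k hA1nn hB1nn hA hB)

open Filter in
/-- The set defining the posterior median is nonempty. -/
lemma median_set_nonempty (γ₀ : ℝ → ℝ) (hnonneg : ∀ u, 0 ≤ γ₀ u)
    (hint : Integrable γ₀) (hdens : ∫ u : ℝ, γ₀ u = 1)
    (w c x : ℝ) (hw : 0 ≤ w) (hw1 : w ≤ 1) :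
    {t : ℝ | 1 / 2 ≤ postCDF γ₀ w c x t}.Nonempty := by
  have hker := integrable_kernel γ₀ hint c x
  have hM : 0 < marg γ₀ w c x := marg_pos γ₀ hnonneg hint hdens w c x hw hw1
  have hUnion : (⋃ n : ℕ, Set.Iic ((n:ℝ))) = Set.univ := by
    ext y
    simp only [Set.mem_iUnion, Set.mem_Iic, Set.mem_univ, iff_true]
    exact exists_nat_ge y
  have htend : Tendsto (fun n : ℕ => ∫ μ in Set.Iic ((n:ℝ)), stdN (x - μ) * γ₀ (μ - c))
      atTop (𝓝 (conv γ₀ c x)) := by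
    have := tendsto_setIntegral_of_monotone (μ := volume)
      (s := fun n : ℕ => Set.Iic ((n:ℝ)))
      (f := fun μ => stdN (x - μ) * γ₀ (μ - c))
      (fun n => measurableSet_Iic)
      (fun n m h => Set.Iic_subset_Iic.2 (Nat.cast_le.2 h))
      (by rw [hUnion]; exact integrableOn_univ.2 hker)
    rw [hUnion] at this
    simpa [conv, setIntegral_univ] using this
  have htend2 : Tendsto (fun n : ℕ => (1 - w) * stdN x
        + w * ∫ μ in Set.Iic ((n:ℝ)), stdN (x - μ) * γ₀ (μ - c))
      atTop (𝓝 (marg γ₀ w c x)) := by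
    unfold marg
    exact tendsto_const_nhds.add ((htend.const_mul w))
  have hev : ∀ᶠ n : ℕ in atTop, marg γ₀ w c x / 2 ≤ (1 - w) * stdN x
      + w * ∫ μ in Set.Iic ((n:ℝ)), stdN (x - μ) * γ₀ (μ - c) :=
    htend2.eventually (eventually_ge_nhds (by linarith))
  obtain ⟨n, hn⟩ := hev.exists
  refine ⟨(n:ℝ), ?_⟩
  have h0n : (0:ℝ) ≤ (n:ℝ) := Nat.cast_nonneg n
  simp only [Set.mem_setOf_eq, postCDF, if_pos h0n, mul_one]
  rw [le_div_iff₀ hM]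
  linarith

open Filter in
/-- The set defining the posterior median is bounded below. -/
lemma median_set_bddBelow (γ₀ : ℝ → ℝ) (hnonneg : ∀ u, 0 ≤ γ₀ u)
    (hint : Integrable γ₀) (hdens : ∫ u : ℝ, γ₀ u = 1)
    (w c x : ℝ) (hw : 0 ≤ w) (hw1 : w ≤ 1) :
    BddBelow {t : ℝ | 1 / 2 ≤ postCDF γ₀ w c x t} := by
  have hker := integrable_kernel γ₀ hint c x
  have hM : 0 < marg γ₀ w c x := marg_pos γ₀ hnonneg hint hdens w c x hw hw1
  have hInter : (⋂ n : ℕ, Set.Iic (-(n:ℝ))) = ∅ := by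
    ext y
    simp only [Set.mem_iInter, Set.mem_Iic, Set.mem_empty_iff_false, iff_false, not_forall]
    obtain ⟨n, hn⟩ := exists_nat_gt (-y)
    exact ⟨n, by push_neg; linarith⟩
  have htend : Tendsto (fun n : ℕ => ∫ μ in Set.Iic (-(n:ℝ)), stdN (x - μ) * γ₀ (μ - c))
      atTop (𝓝 0) := by
    have := tendsto_setIntegral_of_antitone (μ := volume)
      (s := fun n : ℕ => Set.Iic (-(n:ℝ)))
      (f := fun μ => stdN (x - μ) * γ₀ (μ - c))
      (fun n => measurableSet_Iic)
      (fun n m h => Set.Iic_subset_Iic.2 (neg_le_neg (Nat.cast_le.2 h)))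
      ⟨0, hker.integrableOn⟩
    rw [hInter] at this
    simpa using this
  have hev : ∀ᶠ n : ℕ in atTop,
      w * ∫ μ in Set.Iic (-(n:ℝ)), stdN (x - μ) * γ₀ (μ - c) < marg γ₀ w c x / 2 :=
    by
      have h0 : w * 0 < marg γ₀ w c x / 2 := by rw [mul_zero]; exact half_pos hM
      exact (htend.const_mul w).eventually_lt_const h0
  obtain ⟨n, hn⟩ := hev.exists
  refine ⟨-(n:ℝ) - 1, fun t ht => ?_⟩
  by_contra hcon
  push_neg at hcon
  have ht0 : ¬ (0:ℝ) ≤ t := by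
    have : (0:ℝ) ≤ (n:ℝ) := Nat.cast_nonneg n
    push_neg; linarith
  have hsub : (∫ μ in Set.Iic t, stdN (x - μ) * γ₀ (μ - c))
      ≤ ∫ μ in Set.Iic (-(n:ℝ)), stdN (x - μ) * γ₀ (μ - c) := by
    refine setIntegral_mono_set hker.integrableOn
      (Filter.Eventually.of_forall fun μ => mul_nonneg (stdN_pos _).le (hnonneg _))
      ?_
    exact (Set.Iic_subset_Iic.2 (by linarith)).eventuallyLE
  have hlt : postCDF γ₀ w c x t < 1 / 2 := by
    unfold postCDF
    rw [if_neg ht0, mul_zero, zero_add, div_lt_iff₀ hM]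
    have : w * (∫ μ in Set.Iic t, stdN (x - μ) * γ₀ (μ - c))
        ≤ w * ∫ μ in Set.Iic (-(n:ℝ)), stdN (x - μ) * γ₀ (μ - c) :=
      mul_le_mul_of_nonneg_left hsub hw
    linarith
  have := ht
  simp only [Set.mem_setOf_eq] at this
  linarith

/-- Under the prior `(1−w)δ₀ + w γ₀(·−c)` and `X | μ ∼ N(μ,1)`, the posterior median
`δ(x;w,c)` is a nondecreasing function of `x`. -/
theorem stmt3 (γ₀ : ℝ → ℝ) (hmeas : Measurable γ₀) (hnonneg : ∀ u, 0 ≤ γ₀ u)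
    (hint : Integrable γ₀) (hdens : ∫ u : ℝ, γ₀ u = 1)
    (w c : ℝ) (hw : 0 ≤ w) (hw1 : w ≤ 1) :
    Monotone (fun x => postMedian γ₀ w c x) := by
  intro x x' hx
  unfold postMedian
  refine csInf_le_csInf
    (median_set_bddBelow γ₀ hnonneg hint hdens w c x hw hw1)
    (median_set_nonempty γ₀ hnonneg hint hdens w c x' hw hw1)
    ?_
  intro t ht
  simp only [Set.mem_setOf_eq] at ht ⊢
  exact le_trans ht (postCDF_anti γ₀ hnonneg hint hdens w c hw hw1 t hx)
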